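/- Let f : ℝ^m → [0, ∞) be a probability density function that is Lipschitz with Lipschitz constant M > 0, fix γ ∈ (0, 1), and let (ω_n) be a sequence of integers with 1 ≤ ω_n ≤ γ·n for all sufficiently large n. Let X_1, …, X_n be i.i.d. random vectors in ℝ^m with density f. Then there exists a constant C(f, γ) > 0, depending on f and γ but not on n, such that for all sufficiently large n, P( d_{ω_n}(X_1, …, X_n) ≤ C(f, γ) · n^{−1/m} ) ≥ 1 − 12/(n(1 − γ)); in particular this probability tends to 1 as n → ∞. -/

import Mathlib

open MeasureTheory ProbabilityTheory Filter Metric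

/-- The graph on `{1, …, n}` with an edge between distinct `i, j` whenever
`‖x i − x j‖ ≤ r`. -/
def ripsGraph {n m : ℕ} (x : Fin n → EuclideanSpace ℝ (Fin m)) (r : ℝ) :
    SimpleGraph (Fin n) where
  Adj i j := i ≠ j ∧ dist (x i) (x j) ≤ r
  symm := ⟨fun i j h => ⟨h.1.symm, by rw [dist_comm]; exact h.2⟩⟩
  loopless := ⟨fun i h => h.1 rfl⟩

/-- The `k`-th Rips death diameter of the point cloud `x`. -/
noncomputable def ripsDeath {n m : ℕ} (x : Fin n → EuclideanSpace ℝ (Fin m)) (k : ℕ) : ℝ :=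
  sInf {r : ℝ | 0 ≤ r ∧ Nat.card (ripsGraph x r).ConnectedComponent ≤ n - k}

lemma ripsDeath_le_of_card_le {n m : ℕ} (x : Fin n → EuclideanSpace ℝ (Fin m)) (k : ℕ) {r : ℝ}
    (h0 : 0 ≤ r) (h : Nat.card (ripsGraph x r).ConnectedComponent ≤ n - k) :
    ripsDeath x k ≤ r :=
  csInf_le ⟨0, fun _ hy => hy.1⟩ ⟨h0, h⟩

lemma card_components_le_image {n : ℕ} (G : SimpleGraph (Fin n)) {β : Type*} [DecidableEq β]
    (g : Fin n → β) (hg : ∀ i j, g i = g j → G.Reachable i j) :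
    Nat.card G.ConnectedComponent ≤ (Finset.image g Finset.univ).card := by
  classical
  have h : Function.Injective
      (fun c : G.ConnectedComponent =>
        (⟨g c.out, Finset.mem_image_of_mem g (Finset.mem_univ _)⟩ :
          (Finset.image g Finset.univ : Finset β))) := by
    intro c₁ c₂ hc
    have h1 : g c₁.out = g c₂.out := congrArg Subtype.val hc
    have hr := hg _ _ h1
    have e1 : G.connectedComponentMk c₁.out = c₁ := c₁.out_eq
    have e2 : G.connectedComponentMk c₂.out = c₂ := c₂.out_eq
    rw [← e1, ← e2]
    exact SimpleGraph.ConnectedComponent.sound hr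
  calc Nat.card G.ConnectedComponent
      ≤ Nat.card (Finset.image g Finset.univ : Finset β) :=
        Nat.card_le_card_of_injective _ h
    _ = (Finset.image g Finset.univ).card := Nat.card_eq_finsetCard _

lemma abs_coord_le_norm {m : ℕ} (v : EuclideanSpace ℝ (Fin m)) (i : Fin m) : |v i| ≤ ‖v‖ := by
  rw [EuclideanSpace.norm_eq, ← Real.sqrt_sq_eq_abs]
  apply Real.sqrt_le_sqrt
  simpa using Finset.single_le_sum (f := fun j => ‖v j‖ ^ 2)
    (fun j _ => sq_nonneg _) (Finset.mem_univ i)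

lemma components_le_cells {n m : ℕ} (x : Fin n → EuclideanSpace ℝ (Fin m)) {R : ℝ} (hR : 0 < R)
    {K : ℕ} (hK : 0 < K) {r : ℝ}
    (hr : Real.sqrt m * (2 * R / K) ≤ r) :
    Nat.card (ripsGraph x r).ConnectedComponent ≤
      Nat.card {i : Fin n // x i ∉ Metric.closedBall (0 : EuclideanSpace ℝ (Fin m)) R}
        + (K + 1) ^ m := by
  classical
  set S := Metric.closedBall (0 : EuclideanSpace ℝ (Fin m)) R with hS
  set φ : EuclideanSpace ℝ (Fin m) → (Fin m → ℤ) :=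
    fun v i => ⌊(v i + R) * K / (2 * R)⌋ with hφ
  set g : Fin n → (Fin n ⊕ (Fin m → ℤ)) :=
    fun i => if x i ∈ S then Sum.inr (φ (x i)) else Sum.inl i with hgdef
  have hK0 : (0:ℝ) < K := by exact_mod_cast hK
  have hKR : (0:ℝ) < 2 * R / K := by positivity
  have hclose : ∀ u v : EuclideanSpace ℝ (Fin m), φ u = φ v → dist u v ≤ r := by
    intro u v huv
    have hcoord : ∀ i, |u i - v i| ≤ 2 * R / K := by
      intro i
      have h1 : ⌊(u i + R) * K / (2 * R)⌋ = ⌊(v i + R) * K / (2 * R)⌋ := congrFun huv i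
      set a := (u i + R) * K / (2 * R)
      set b := (v i + R) * K / (2 * R)
      have hab : |a - b| < 1 := by
        have h2 := Int.floor_le a
        have h3 := Int.floor_le b
        have h4 := Int.lt_floor_add_one a
        have h5 := Int.lt_floor_add_one b
        rw [h1] at h2 h4
        rw [abs_lt]; constructor <;> linarith
      have hab2 : a - b = (u i - v i) * K / (2 * R) := by
        show (u i + R) * K / (2 * R) - (v i + R) * K / (2 * R) = _; ring
      rw [hab2] at hab
      rw [abs_div, abs_mul, abs_of_pos (by positivity : (0:ℝ) < 2 * R),
        abs_of_pos hK0, div_lt_one (by positivity)] at hab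
      rw [le_div_iff₀ hK0]
      nlinarith [abs_nonneg (u i - v i)]
    have hdle : dist u v ≤ Real.sqrt m * (2 * R / K) := by
      rw [EuclideanSpace.dist_eq]
      have hb : ∀ i, dist (u i) (v i) ^ 2 ≤ (2 * R / K) ^ 2 := by
        intro i
        have := hcoord i
        rw [Real.dist_eq]
        nlinarith [abs_nonneg (u i - v i), le_abs_self (u i - v i), neg_abs_le (u i - v i)]
      calc Real.sqrt (∑ i, dist (u i) (v i) ^ 2)
          ≤ Real.sqrt (∑ _i : Fin m, (2 * R / K) ^ 2) :=
            Real.sqrt_le_sqrt (Finset.sum_le_sum fun i _ => hb i)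
        _ = Real.sqrt (m * (2 * R / K) ^ 2) := by rw [Finset.sum_const]; simp [mul_comm]
        _ = Real.sqrt m * (2 * R / K) := by
            rw [Real.sqrt_mul (by positivity), Real.sqrt_sq hKR.le]
    linarith
  have hg : ∀ i j, g i = g j → (ripsGraph x r).Reachable i j := by
    intro i j hij
    rcases eq_or_ne i j with rfl | hne
    · exact SimpleGraph.Reachable.refl _
    · simp only [hgdef] at hij
      by_cases hi : x i ∈ S <;> by_cases hj : x j ∈ S <;> simp [hi, hj] at hij
      · exact SimpleGraph.Adj.reachable (G := ripsGraph x r) (And.intro hne (hclose _ _ hij))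
      · exact absurd hij hne
  refine (card_components_le_image _ g hg).trans ?_
  have hsub : Finset.image g Finset.univ ⊆
      (Finset.image Sum.inl ((Finset.univ.filter fun i => x i ∉ S))) ∪
      (Finset.image Sum.inr (Fintype.piFinset fun _ : Fin m => Finset.Icc (0:ℤ) K)) := by
    intro v hv
    rw [Finset.mem_image] at hv
    obtain ⟨i, -, rfl⟩ := hv
    by_cases hi : x i ∈ S
    · apply Finset.mem_union_right
      rw [Finset.mem_image]
      refine ⟨φ (x i), ?_, by simp [hgdef, hi]⟩
      rw [Fintype.mem_piFinset]
      intro j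
      have hcoordR : |x i j| ≤ R := by
        have h1 : ‖x i‖ ≤ R := by rwa [hS, mem_closedBall, dist_zero_right] at hi
        exact (abs_coord_le_norm _ _).trans h1
      rw [abs_le] at hcoordR
      have ht0 : (0:ℝ) ≤ (x i j + R) * K / (2 * R) :=
        div_nonneg (mul_nonneg (by linarith [hcoordR.1]) hK0.le) (by positivity)
      have ht1 : (x i j + R) * K / (2 * R) ≤ (K : ℝ) := by
        rw [div_le_iff₀ (by positivity)]
        nlinarith [hcoordR.2]
      rw [Finset.mem_Icc]
      refine ⟨Int.floor_nonneg.mpr ht0, ?_⟩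
      have := Int.floor_le_floor ht1
      rwa [Int.floor_natCast] at this
    · apply Finset.mem_union_left
      rw [Finset.mem_image]
      exact ⟨i, by simp [hi], by simp [hgdef, hi]⟩
  calc (Finset.image g Finset.univ).card
      ≤ _ := Finset.card_le_card hsub
    _ ≤ _ := Finset.card_union_le _ _
    _ ≤ Nat.card {i : Fin n // x i ∉ S} + (K + 1) ^ m := by
        gcongr
        · refine Finset.card_image_le.trans ?_
          rw [Nat.card_eq_fintype_card, Fintype.card_subtype]
        · refine Finset.card_image_le.trans ?_
          rw [Fintype.card_piFinset]
          simp [Int.card_Icc]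

set_option maxHeartbeats 1000000 in
theorem ripsDeath_upper_quantile_bound {m : ℕ}
    (f : EuclideanSpace ℝ (Fin m) → ℝ) (hf0 : ∀ x, 0 ≤ f x) (hfint : ∫ x, f x = 1)
    {M : ℝ} (hM : 0 < M) (hLip : LipschitzWith M.toNNReal f)
    {γ : ℝ} (hγ0 : 0 < γ) (hγ1 : γ < 1)
    (w : ℕ → ℕ) (hw : ∀ᶠ n : ℕ in atTop, 1 ≤ w n ∧ (w n : ℝ) ≤ γ * n)
    {Ω : Type*} [MeasureSpace Ω] [IsProbabilityMeasure (ℙ : Measure Ω)]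
    (X : ℕ → Ω → EuclideanSpace ℝ (Fin m)) (hmeas : ∀ i, Measurable (X i))
    (hindep : iIndepFun X ℙ)
    (hlaw : ∀ i, Measure.map (X i) ℙ = volume.withDensity fun x => ENNReal.ofReal (f x)) :
    ∃ C > (0 : ℝ),
      (∀ᶠ n : ℕ in atTop,
        1 - 12 / (n * (1 - γ)) ≤
          (ℙ {ω | ripsDeath (fun i : Fin n => X i ω) (w n)
            ≤ C * (n : ℝ) ^ (-(1 : ℝ) / m)}).toReal) ∧
      Tendsto (fun n : ℕ =>
          (ℙ {ω | ripsDeath (fun i : Fin n => X i ω) (w n)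
            ≤ C * (n : ℝ) ^ (-(1 : ℝ) / m)}).toReal) atTop (nhds 1) := by
  classical
  set ε : ℝ := 1 - γ with hεdef
  have hε0 : 0 < ε := by rw [hεdef]; linarith
  have hfmeas : Measurable f := hLip.continuous.measurable
  set μ : Measure (EuclideanSpace ℝ (Fin m)) :=
    volume.withDensity fun x => ENNReal.ofReal (f x) with hμdef
  have hfi : Integrable f := by
    by_contra h
    rw [integral_undef h] at hfint; norm_num at hfint
  have hμuniv : μ Set.univ = 1 := by
    rw [hμdef, withDensity_apply _ MeasurableSet.univ, Measure.restrict_univ,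
      ← ofReal_integral_eq_lintegral_ofReal hfi (Eventually.of_forall hf0), hfint,
      ENNReal.ofReal_one]
  obtain ⟨R, hR1, hRp⟩ : ∃ R : ℕ, 1 ≤ R ∧
      ENNReal.ofReal (1 - ε/4) < μ (closedBall (0 : EuclideanSpace ℝ (Fin m)) R) := by
    have hmono : Monotone fun j : ℕ => closedBall (0 : EuclideanSpace ℝ (Fin m)) (j:ℝ) :=
      fun a b hab => closedBall_subset_closedBall (by exact_mod_cast hab)
    have hun : (⋃ j : ℕ, closedBall (0 : EuclideanSpace ℝ (Fin m)) (j:ℝ)) = Set.univ := by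
      apply Set.eq_univ_of_forall
      intro v
      exact Set.mem_iUnion.mpr ⟨⌈‖v‖⌉₊, by simp [mem_closedBall, dist_zero_right, Nat.le_ceil]⟩
    have ht : Tendsto (fun j : ℕ => μ (closedBall (0:EuclideanSpace ℝ (Fin m)) (j:ℝ)))
        atTop (nhds 1) := by
      have h := tendsto_measure_iUnion_atTop (μ := μ) hmono
      rwa [hun, hμuniv] at h
    have hlt : ENNReal.ofReal (1 - ε/4) < 1 := by
      rw [← ENNReal.ofReal_one]
      exact (ENNReal.ofReal_lt_ofReal_iff one_pos).mpr (by linarith)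
    obtain ⟨R, hR⟩ := ((ht.eventually (lt_mem_nhds hlt)).and (eventually_ge_atTop 1)).exists
    exact ⟨R, hR.2, hR.1⟩
  set S : Set (EuclideanSpace ℝ (Fin m)) := closedBall 0 (R:ℝ) with hSdef
  have hSmeas : MeasurableSet S := measurableSet_closedBall
  have hR0 : (0:ℝ) < R := by exact_mod_cast hR1
  have hμS_le : μ S ≤ 1 := hμuniv ▸ measure_mono (Set.subset_univ S)
  have hμS_ne : μ S ≠ ⊤ := (hμS_le.trans_lt ENNReal.one_lt_top).ne
  set p : ℝ := (μ S).toReal with hpdef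
  have hp0 : 0 ≤ p := ENNReal.toReal_nonneg
  have hp1 : p ≤ 1 := by
    have := ENNReal.toReal_mono ENNReal.one_ne_top hμS_le
    simpa using this
  have hp_lb : 1 - ε/4 ≤ p :=
    (ENNReal.ofReal_le_iff_le_toReal hμS_ne).mp hRp.le
  set δ' : ℝ := ε / 2^(m+2) with hδ'def
  have hδ'0 : 0 < δ' := by positivity
  set C : ℝ := 4 * R * (Real.sqrt m + 1) * δ' ^ (-(1:ℝ)/(m:ℝ)) with hCdef
  have hC0 : 0 < C := by
    apply mul_pos (mul_pos (by linarith) (by positivity))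
    exact Real.rpow_pos_of_pos hδ'0 _
  -- indicator random variables
  set g0 : EuclideanSpace ℝ (Fin m) → ℝ := S.indicator (fun _ => (1:ℝ)) with hg0def
  have hg0meas : Measurable g0 := measurable_const.indicator hSmeas
  set Y : ℕ → Ω → ℝ := fun i => g0 ∘ X i with hYdef
  have hYmeas : ∀ i, Measurable (Y i) := fun i => hg0meas.comp (hmeas i)
  have hYmem : ∀ i, MemLp (Y i) 2 ℙ := by
    intro i
    apply MemLp.of_bound (hYmeas i).aestronglyMeasurable 1
    filter_upwards with ω
    simp only [hYdef, hg0def, Function.comp_apply, Set.indicator_apply]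
    split_ifs <;> simp
  have hEY : ∀ i, ∫ ω, Y i ω ∂ℙ = p := by
    intro i
    have h1 : (fun ω => Y i ω) = fun ω => Set.indicator (X i ⁻¹' S) (fun _ => (1:ℝ)) ω := by
      funext ω
      simp [hYdef, hg0def, Set.indicator_apply, Set.mem_preimage]
    rw [h1, integral_indicator_const _ ((hmeas i) hSmeas), smul_eq_mul, mul_one, hpdef]
    congr 1
    rw [← hlaw i, Measure.map_apply (hmeas i) hSmeas]
    rfl
  have hYsq : ∀ i, (Y i) ^ 2 = Y i := by
    intro i; funext ω
    simp only [Pi.pow_apply, hYdef, hg0def, Function.comp_apply, Set.indicator_apply]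
    split_ifs <;> norm_num
  have hVarY : ∀ i, variance (Y i) ℙ = p - p^2 := by
    intro i
    rw [variance_eq_sub (hYmem i), hYsq i, hEY i]
  have hpair : ∀ (i j : ℕ), i ≠ j → IndepFun (Y i) (Y j) ℙ := fun i j hij =>
    (hindep.indepFun hij).comp hg0meas hg0meas
  set SY : ℕ → Ω → ℝ := fun n => ∑ i ∈ Finset.range n, Y i with hSYdef
  have hSY_apply : ∀ n ω, SY n ω = ∑ i ∈ Finset.range n, Y i ω := by
    intro n ω; rw [hSYdef]; exact Finset.sum_apply ω _ _
  have hSYmeas : ∀ n, Measurable (SY n) := by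
    intro n
    have h1 := Finset.measurable_sum (Finset.range n) (fun i _ => hYmeas i)
    convert h1 using 1
    funext ω; exact hSY_apply n ω
  have hSYmem : ∀ n, MemLp (SY n) 2 ℙ := fun n => memLp_finsetSum' _ (fun i _ => hYmem i)
  have hESY : ∀ n, ∫ ω, SY n ω ∂ℙ = n * p := by
    intro n
    have h1 : ∀ ω, SY n ω = ∑ i ∈ Finset.range n, Y i ω := fun ω => Finset.sum_apply ω _ _
    simp_rw [h1]
    rw [integral_finset_sum _ (fun i _ => (hYmem i).integrable one_le_two)]
    rw [Finset.sum_congr rfl (fun i _ => hEY i), Finset.sum_const, Finset.card_range,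
      nsmul_eq_mul]
  have hVarSY : ∀ n, variance (SY n) ℙ = n * (p - p^2) := by
    intro n
    rw [hSYdef, IndepFun.variance_sum (fun i _ => hYmem i)
      (fun i _ j _ hij => hpair i j hij)]
    rw [Finset.sum_congr rfl (fun i _ => hVarY i), Finset.sum_const, Finset.card_range,
      nsmul_eq_mul]
  -- main per-n estimate
  have key : ∀ n : ℕ, (1 ≤ w n ∧ (w n : ℝ) ≤ γ * n) → ((2:ℝ)^m ≤ δ' * n) →
      1 - 12 / (n * ε) ≤
        (ℙ {ω | ripsDeath (fun i : Fin n => X i ω) (w n)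
          ≤ C * (n : ℝ) ^ (-(1 : ℝ) / m)}).toReal := by
    intro n hwn hc2
    obtain ⟨hw1, hwγ⟩ := hwn
    have hn1 : (1:ℝ) ≤ n := by
      have h1 : (1:ℝ) ≤ γ * n := le_trans (by exact_mod_cast hw1) hwγ
      nlinarith [Nat.cast_nonneg (α := ℝ) n]
    have hn0 : (0:ℝ) < n := by linarith
    set K := ⌊(δ' * n) ^ ((1:ℝ)/m)⌋₊ with hKdef
    have hδn0 : (0:ℝ) < δ' * n := mul_pos hδ'0 hn0
    have ha0 : (0:ℝ) < (δ' * n) ^ ((1:ℝ)/m) := Real.rpow_pos_of_pos hδn0 _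
    have ha1 : (1:ℝ) ≤ (δ' * n) ^ ((1:ℝ)/m) := by
      have h2m : (1:ℝ) ≤ δ' * n := le_trans (one_le_pow₀ one_le_two) hc2
      calc (1:ℝ) = 1 ^ ((1:ℝ)/m) := (Real.one_rpow _).symm
        _ ≤ (δ' * n) ^ ((1:ℝ)/m) := Real.rpow_le_rpow zero_le_one h2m (by positivity)
    have hK1 : 1 ≤ K := Nat.le_floor (by push_cast; exact ha1)
    have hK0' : (0:ℝ) < K := by exact_mod_cast hK1
    set N := (K + 1) ^ m with hNdef
    have hKm : ((K:ℝ)) ^ m ≤ δ' * n := by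
      have h1 : (K:ℝ) ≤ (δ' * n) ^ ((1:ℝ)/m) := Nat.floor_le ha0.le
      rcases Nat.eq_zero_or_pos m with hm | hm
      · subst hm; simpa using hc2
      · calc (K:ℝ)^m ≤ ((δ' * n) ^ ((1:ℝ)/m))^m := pow_le_pow_left₀ (Nat.cast_nonneg K) h1 m
          _ = δ' * n := by
              rw [← Real.rpow_natCast ((δ' * n) ^ ((1:ℝ)/m)) m, ← Real.rpow_mul hδn0.le,
                one_div, inv_mul_cancel₀ (by exact_mod_cast hm.ne' : (m:ℝ) ≠ 0),
                Real.rpow_one]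
    have hK1' : (1:ℝ) ≤ K := by exact_mod_cast hK1
    have hN : (N:ℝ) ≤ ε * n / 4 := by
      have h1 : ((K:ℝ) + 1) ^ m ≤ (2 * K) ^ m :=
        pow_le_pow_left₀ (by positivity) (by linarith) m
      have h2 : ((2:ℝ) * K) ^ m = 2^m * (K:ℝ)^m := mul_pow 2 _ m
      have h3 : (2:ℝ)^m * (δ' * n) = ε * n / 4 := by
        rw [hδ'def]
        have h2m2 : (2:ℝ)^(m+2) = 2^m * 4 := by rw [pow_add]; norm_num
        rw [h2m2]
        field_simp
      have h4 : (N:ℝ) = ((K:ℝ) + 1) ^ m := by push_cast [hNdef]; ring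
      have h5 : (2:ℝ)^m * (K:ℝ)^m ≤ 2^m * (δ' * n) :=
        mul_le_mul_of_nonneg_left hKm (by positivity)
      linarith
    have hr0 : 0 ≤ C * (n:ℝ)^(-(1:ℝ)/m) :=
      mul_nonneg hC0.le (Real.rpow_nonneg (Nat.cast_nonneg n) _)
    have hrK : Real.sqrt m * (2 * (R:ℝ) / K) ≤ C * (n:ℝ)^(-(1:ℝ)/m) := by
      rcases Nat.eq_zero_or_pos m with hm | hm
      · subst hm
        simpa using hr0
      · have hm0 : (m:ℝ) ≠ 0 := by exact_mod_cast hm.ne'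
        have ha2 : (2:ℝ) ≤ (δ' * n) ^ ((1:ℝ)/m) := by
          calc (2:ℝ) = ((2:ℝ)^m) ^ ((1:ℝ)/m) := by
                rw [← Real.rpow_natCast 2 m, ← Real.rpow_mul (by norm_num), mul_one_div,
                  div_self hm0, Real.rpow_one]
            _ ≤ _ := Real.rpow_le_rpow (by positivity) hc2 (by positivity)
        set a := (δ' * n) ^ ((1:ℝ)/m) with hadef
        have hKa : a ≤ 2 * K := by
          have h6 : a - 1 < (K:ℝ) := by
            rw [hKdef]
            exact_mod_cast Nat.sub_one_lt_floor a
          linarith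
        have hstep : 2 * (R:ℝ) / K ≤ 4 * R / a := by
          rw [div_le_div_iff₀ hK0' (by positivity : (0:ℝ) < a)]
          nlinarith [hR0]
        have hnd : -(1:ℝ)/(m:ℝ) = -((1:ℝ)/m) := by ring
        have hainv : 1 / a = δ' ^ (-(1:ℝ)/m) * (n:ℝ) ^ (-(1:ℝ)/m) := by
          rw [hnd, Real.rpow_neg hδ'0.le, Real.rpow_neg (Nat.cast_nonneg n), hadef,
            Real.mul_rpow hδ'0.le (Nat.cast_nonneg n), one_div, mul_inv]
        have hposn : (0:ℝ) ≤ (n:ℝ) ^ (-(1:ℝ)/m) := Real.rpow_nonneg (Nat.cast_nonneg n) _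
        have hposd : (0:ℝ) ≤ δ' ^ (-(1:ℝ)/m) := (Real.rpow_pos_of_pos hδ'0 _).le
        calc Real.sqrt m * (2 * (R:ℝ) / K) ≤ Real.sqrt m * (4 * R / a) :=
              mul_le_mul_of_nonneg_left hstep (Real.sqrt_nonneg _)
          _ = 4 * R * Real.sqrt m * (1 / a) := by ring
          _ = 4 * R * Real.sqrt m * (δ' ^ (-(1:ℝ)/m) * (n:ℝ) ^ (-(1:ℝ)/m)) := by rw [hainv]
          _ ≤ 4 * R * (Real.sqrt m + 1) * δ' ^ (-(1:ℝ)/m) * (n:ℝ) ^ (-(1:ℝ)/m) := by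
              have hs := Real.sqrt_nonneg (m:ℝ)
              nlinarith [mul_nonneg hposd hposn, hR0]
          _ = C * (n:ℝ)^(-(1:ℝ)/m) := by rw [hCdef]
      -- end m pos
    set A : Set Ω := {ω | ((w n : ℝ) + N) ≤ SY n ω} with hAdef
    have hAmeas : MeasurableSet A := measurableSet_le measurable_const (hSYmeas n)
    have hcnt : ∀ ω, SY n ω =
        ((Finset.univ.filter fun i : Fin n => X i ω ∈ S).card : ℝ) := by
      intro ω
      rw [hSY_apply n ω, Finset.card_filter]
      push_cast
      rw [← Fin.sum_univ_eq_sum_range (fun i => Y i ω) n]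
      refine Finset.sum_congr rfl fun i _ => ?_
      simp [hYdef, hg0def, Set.indicator_apply]
    have hsub : A ⊆ {ω | ripsDeath (fun i : Fin n => X i ω) (w n)
        ≤ C * (n : ℝ) ^ (-(1 : ℝ) / m)} := by
      intro ω hω
      set cnt := (Finset.univ.filter fun i : Fin n => X i ω ∈ S).card with hcntdef
      have hcnt_ge : w n + N ≤ cnt := by
        have h7 : ((w n : ℝ) + N) ≤ (cnt : ℝ) := by
          rw [← hcnt ω]; exact hω
        exact_mod_cast h7
      have hcnt_le : cnt ≤ n := (Finset.card_filter_le _ _).trans (by simp)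
      refine ripsDeath_le_of_card_le _ _ hr0 ?_
      have hcomp := components_le_cells (fun i : Fin n => X i ω) hR0 (by omega : 0 < K) hrK
      have hout : Nat.card {i : Fin n //
          (fun i : Fin n => X i ω) i ∉ Metric.closedBall (0 : EuclideanSpace ℝ (Fin m)) (R:ℝ)}
          = n - cnt := by
        rw [Nat.card_eq_fintype_card, Fintype.card_subtype]
        show (Finset.filter (fun i : Fin n => ¬ (X i ω ∈ S)) Finset.univ).card = n - cnt
        have h8 := Finset.card_filter_add_card_filter_not
          (s := Finset.univ (α := Fin n)) (p := fun i : Fin n => X i ω ∈ S)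
        simp only [Finset.card_univ, Fintype.card_fin] at h8
        omega
      rw [hout] at hcomp
      have hN1 : 1 ≤ N := Nat.one_le_pow _ _ (by omega)
      refine hcomp.trans ?_
      omega
    have hBsub : Aᶜ ⊆ {ω | (n:ℝ)*ε/2 ≤ |SY n ω - ∫ ω', SY n ω' ∂ℙ|} := by
      intro ω hω
      simp only [hAdef, Set.mem_compl_iff, Set.mem_setOf_eq, not_le] at hω
      have h1 : SY n ω < γ*n + ε*n/4 := lt_of_lt_of_le hω (by linarith)
      have h3 : (n:ℝ)*ε/2 ≤ n*p - SY n ω := by nlinarith [hp_lb, hn0]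
      rw [Set.mem_setOf_eq, hESY n]
      calc (n:ℝ)*ε/2 ≤ n*p - SY n ω := h3
        _ ≤ |SY n ω - n*p| := by rw [abs_sub_comm]; exact le_abs_self _
    have hcheb := meas_ge_le_variance_div_sq (μ := ℙ) (hSYmem n)
      (c := (n:ℝ)*ε/2) (by positivity)
    have hvle : variance (SY n) ℙ / ((n:ℝ)*ε/2)^2 ≤ 1/(n*ε) := by
      rw [hVarSY n]
      have hq : p - p^2 ≤ ε/4 := by nlinarith [sq_nonneg (1-p), hp_lb]
      have hv1 : (n:ℝ)*(p - p^2) ≤ n*(ε/4) := mul_le_mul_of_nonneg_left hq hn0.le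
      rw [div_le_div_iff₀ (by positivity) (by positivity)]
      nlinarith [mul_pos hn0 hε0, hv1]
    have hBc : ℙ Aᶜ ≤ ENNReal.ofReal (1/(n*ε)) :=
      le_trans (measure_mono hBsub) (hcheb.trans (ENNReal.ofReal_le_ofReal hvle))
    have hPA : 1 - 1/(n*ε) ≤ (ℙ A).toReal := by
      have h5 : ℙ A = 1 - ℙ Aᶜ := by
        rw [← compl_compl A, prob_compl_eq_one_sub hAmeas.compl, compl_compl]
      rw [h5, ENNReal.toReal_sub_of_le prob_le_one ENNReal.one_ne_top]
      have h6 : (ℙ Aᶜ).toReal ≤ 1/(n*ε) := by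
        have h7 := ENNReal.toReal_mono ENNReal.ofReal_ne_top hBc
        rwa [ENNReal.toReal_ofReal (by positivity)] at h7
      simp only [ENNReal.toReal_one]
      linarith
    have hmono := ENNReal.toReal_mono (measure_ne_top ℙ _) (measure_mono hsub)
    have h12 : 1 - 12/((n:ℝ)*ε) ≤ 1 - 1/((n:ℝ)*ε) := by
      have h13 : 1/((n:ℝ)*ε) ≤ 12/((n:ℝ)*ε) := by gcongr; norm_num
      linarith
    linarith
  -- eventual hypotheses
  have hev2 : ∀ᶠ n : ℕ in atTop, (2:ℝ)^m ≤ δ' * n := by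
    have h1 := (tendsto_natCast_atTop_atTop (R := ℝ)).eventually_ge_atTop ((2:ℝ)^m / δ')
    filter_upwards [h1] with n hn
    rw [div_le_iff₀ hδ'0] at hn
    linarith
  have hev := hw.and hev2
  refine ⟨C, hC0, ?_, ?_⟩
  · filter_upwards [hev] with n hn
    exact key n hn.1 hn.2
  · have hlow : Tendsto (fun n : ℕ => 1 - 12/((n:ℝ)*ε)) atTop (nhds 1) := by
      have h0 : Tendsto (fun n : ℕ => 12/((n:ℝ)*ε)) atTop (nhds 0) := by
        have heq : (fun n : ℕ => 12/((n:ℝ)*ε)) = fun n : ℕ => (12/ε)/(n:ℝ) := by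
          funext n
          rw [div_div, mul_comm]
        rw [heq]
        exact tendsto_const_div_atTop_nhds_zero_nat _
      have := (tendsto_const_nhds (x := (1:ℝ)) (f := atTop (α := ℕ))).sub h0
      simpa using this
    apply tendsto_of_tendsto_of_tendsto_of_le_of_le' hlow tendsto_const_nhds
    · filter_upwards [hev] with n hn
      exact key n hn.1 hn.2
    · filter_upwards with n
      have h1 : ℙ {ω | ripsDeath (fun i : Fin n => X i ω) (w n)
          ≤ C * (n : ℝ) ^ (-(1 : ℝ) / m)} ≤ 1 := prob_le_one
      simpa using ENNReal.toReal_mono ENNReal.one_ne_top h1
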